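/- Let 0<τ1≤τ2<1, let λ≥0 and let P:ℝ^n→ℝ be submodular. For i=1,2, define G^{τi}(θ)=Σ_{j=1}^n ρ_{τi}(y_j−θ_j) + λ·P(θ) and let θ̂^{(i)} be any minimizer of G^{τi} over ℝ^n. Define θ̃^{(1)} = θ̂^{(1)} ∧ θ̂^{(2)} (coordinatewise minimum) and θ̃^{(2)} = θ̂^{(1)} ∨ θ̂^{(2)} (coordinatewise maximum). Then θ̃^{(1)} is a minimizer of G^{τ1} and θ̃^{(2)} is a minimizer of G^{τ2}. -/

import Mathlib

open scoped BigOperators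

noncomputable section

namespace QTVD

/-- Quantile (check) loss `ρ_τ(x) = max{τx, (τ-1)x}`. -/
def qloss (τ x : ℝ) : ℝ := max (τ * x) ((τ - 1) * x)

/-- Total variation `TV(θ) = ∑ |θ_{i+1} - θ_i|` (coordinates indexed `0,…,n-1`). -/
def TV {n : ℕ} (θ : Fin n → ℝ) : ℝ :=
  ∑ i : Fin n, if h : (i : ℕ) + 1 < n then |θ ⟨(i : ℕ) + 1, h⟩ - θ i| else 0

/-- Quantile TVD objective. -/
def obj {n : ℕ} (τ lam : ℝ) (y θ : Fin n → ℝ) : ℝ :=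
  (∑ i : Fin n, qloss τ (y i - θ i)) + lam * TV θ

/-- Quantile TVD solution set `S^τ`. -/
def sol {n : ℕ} (τ lam : ℝ) (y : Fin n → ℝ) : Set (Fin n → ℝ) :=
  {θ | ∀ η : Fin n → ℝ, obj τ lam y θ ≤ obj τ lam y η}

/-- `k`-th smallest entry of `y` restricted to `I` (as extended real;
`⊥` if `k ≤ 0`, `⊤` if `k ≥ |I| + 1`). -/
def orderStat {n : ℕ} (y : Fin n → ℝ) (I : Finset (Fin n)) (k : ℤ) : EReal :=
  if k ≤ 0 then ⊥
  else if (I.card : ℤ) < k then ⊤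
  else (((I.val.map y).sort (· ≤ ·)).getD (k.toNat - 1) 0 : ℝ)

/-- The constant `C_{I,J}` for discrete intervals `I=[c:d] ⊆ J=[a:b] ⊆ [0:n-1]`
(0-based indexing; 1-based `[s:t] ⊆ [j1:j2] ⊆ [1:n]` corresponds to
`c = s-1, d = t-1, a = j1-1, b = j2-1`). -/
def Cconst (n c d a b : ℕ) : ℝ :=
  if 0 < a ∧ b < n - 1 then
    if a < c ∧ d < b then 1 else if c = a ∧ d = b then -1 else 0
  else if a = 0 ∧ b < n - 1 then
    if a < c ∧ d < b then 1 else if c = a ∧ d = b then -(1/2)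
      else if c = 0 ∧ d < b then 1/2 else 0
  else if 0 < a ∧ b = n - 1 then
    if a < c ∧ d < b then 1 else if c = a ∧ d = b then -(1/2)
      else if a < c ∧ d = b then 1/2 else 0
  else
    if a < c ∧ d < b then 1 else if c = a ∧ d = b then 0 else 1/2

/-- `u^τ_{I,J} = τ|I| - 2λ C_{I,J}` for `I=[c:d] ⊆ J=[a:b]`. -/
def uIJ (τ lam : ℝ) (n c d a b : ℕ) : ℝ :=
  τ * ((d : ℝ) - (c : ℝ) + 1) - 2 * lam * Cconst n c d a b

/-- `l^τ_{I,J} = τ|I| + 2λ C_{I,J}` for `I=[c:d] ⊆ J=[a:b]`. -/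
def lIJ (τ lam : ℝ) (n c d a b : ℕ) : ℝ :=
  τ * ((d : ℝ) - (c : ℝ) + 1) + 2 * lam * Cconst n c d a b

/-- Upper envelope `U^τ_i`: min over intervals `J ∋ i` of the max over
subintervals `I ⊆ J` with `i ∈ I` of `y_{I,(⌊u^τ_{I,J}⌋+1)}`. -/
def Uenv {n : ℕ} (τ lam : ℝ) (y : Fin n → ℝ) (i : Fin n) : EReal :=
  ⨅ (a : Fin n) (b : Fin n) (_ : a ≤ i) (_ : i ≤ b),
    ⨆ (c : Fin n) (d : Fin n) (_ : a ≤ c) (_ : c ≤ i) (_ : i ≤ d) (_ : d ≤ b),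
      orderStat y (Finset.Icc c d) (⌊uIJ τ lam n (c : ℕ) (d : ℕ) (a : ℕ) (b : ℕ)⌋ + 1)

/-- Lower envelope `L^τ_i`: max over intervals `J ∋ i` of the min over
subintervals `I ⊆ J` with `i ∈ I` of `y_{I,(⌈l^τ_{I,J}⌉)}`. -/
def Lenv {n : ℕ} (τ lam : ℝ) (y : Fin n → ℝ) (i : Fin n) : EReal :=
  ⨆ (a : Fin n) (b : Fin n) (_ : a ≤ i) (_ : i ≤ b),
    ⨅ (c : Fin n) (d : Fin n) (_ : a ≤ c) (_ : c ≤ i) (_ : i ≤ d) (_ : d ≤ b),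
      orderStat y (Finset.Icc c d) ⌈lIJ τ lam n (c : ℕ) (d : ℕ) (a : ℕ) (b : ℕ)⌉

/-- Admissible dual (KKT) variables `(g, z)` for a candidate solution `θ`.
`z` is indexed by `Fin (n+1)` (so `z 0,…,z n` with `z 0 = z n = 0`); the
edge between coordinates `j` and `j+1` (0-based) corresponds to `z (j+1)`. -/
def IsDual {n : ℕ} (τ lam : ℝ) (y θ : Fin n → ℝ) (g : Fin n → ℝ)
    (z : Fin (n + 1) → ℝ) : Prop :=
  z 0 = 0 ∧ z (Fin.last n) = 0 ∧
  (∀ j : Fin n, ∀ h : (j : ℕ) + 1 < n,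
    (θ ⟨(j : ℕ) + 1, h⟩ < θ j → z j.succ = lam) ∧
    (θ j = θ ⟨(j : ℕ) + 1, h⟩ → -lam ≤ z j.succ ∧ z j.succ ≤ lam) ∧
    (θ j < θ ⟨(j : ℕ) + 1, h⟩ → z j.succ = -lam)) ∧
  (∀ j : Fin n,
    (θ j < y j → g j = -τ) ∧
    (θ j = y j → -τ ≤ g j ∧ g j ≤ 1 - τ) ∧
    (y j < θ j → g j = 1 - τ)) ∧
  (∀ a b : Fin n, a ≤ b → (∑ j ∈ Finset.Icc a b, g j) = z a.castSucc - z b.succ)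

/-- `sign_+(x) = 1` if `x ≥ 0`, `-1` if `x < 0`. -/
def signP (x : ℝ) : ℝ := if 0 ≤ x then 1 else -1

/-- `sign_-(x) = 1` if `x > 0`, `-1` if `x ≤ 0`. -/
def signM (x : ℝ) : ℝ := if 0 < x then 1 else -1

/-- Submodularity with respect to the coordinatewise lattice structure on `ℝ^n`. -/
def Submodular {n : ℕ} (P : (Fin n → ℝ) → ℝ) : Prop :=
  ∀ x y : Fin n → ℝ, P (x ⊔ y) + P (x ⊓ y) ≤ P x + P y

/-- Penalized quantile regression objective with a general penalty `P`. -/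
def Gobj {n : ℕ} (τ lam : ℝ) (y : Fin n → ℝ) (P : (Fin n → ℝ) → ℝ)
    (θ : Fin n → ℝ) : ℝ :=
  (∑ j : Fin n, qloss τ (y j - θ j)) + lam * P θ

end QTVD

lemma qloss_eq (τ x : ℝ) : QTVD.qloss τ x = τ * x + max 0 (-x) := by
  unfold QTVD.qloss
  rcases le_total x 0 with h | h
  · rw [max_eq_right (by nlinarith), max_eq_right (by linarith)]; ring
  · rw [max_eq_left (by nlinarith), max_eq_left (by linarith)]; ring

lemma qloss_exchange (τ₁ τ₂ : ℝ) (hτ : τ₁ ≤ τ₂) (a b c : ℝ) :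
    QTVD.qloss τ₁ (c - min a b) + QTVD.qloss τ₂ (c - max a b) ≤
      QTVD.qloss τ₁ (c - a) + QTVD.qloss τ₂ (c - b) := by
  rcases le_total a b with h | h
  · rw [min_eq_left h, max_eq_right h]
  · rw [min_eq_right h, max_eq_left h]
    simp only [qloss_eq]
    nlinarith [le_max_left (0:ℝ) (-(c-a)), le_max_left (0:ℝ) (-(c-b))]

/-- Lattice property of minimizers of penalized quantile
regression with a submodular penalty. For `0 < τ₁ ≤ τ₂ < 1`, `λ ≥ 0` and a
submodular penalty `P`, if `θ̂⁽¹⁾` minimizes `G^{τ₁}` and `θ̂⁽²⁾` minimizes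
`G^{τ₂}`, then the coordinatewise minimum minimizes `G^{τ₁}` and the
coordinatewise maximum minimizes `G^{τ₂}`. -/
theorem submodular_lattice_of_minimizers
    {n : ℕ} (y : Fin n → ℝ) (τ₁ τ₂ lam : ℝ)
    (hτ1 : 0 < τ₁) (hτ12 : τ₁ ≤ τ₂) (hτ2 : τ₂ < 1) (hlam : 0 ≤ lam)
    (P : (Fin n → ℝ) → ℝ) (hP : QTVD.Submodular P)
    (θ₁ θ₂ : Fin n → ℝ)
    (hθ₁ : ∀ η : Fin n → ℝ, QTVD.Gobj τ₁ lam y P θ₁ ≤ QTVD.Gobj τ₁ lam y P η)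
    (hθ₂ : ∀ η : Fin n → ℝ, QTVD.Gobj τ₂ lam y P θ₂ ≤ QTVD.Gobj τ₂ lam y P η) :
    (∀ η : Fin n → ℝ, QTVD.Gobj τ₁ lam y P (θ₁ ⊓ θ₂) ≤ QTVD.Gobj τ₁ lam y P η) ∧
    (∀ η : Fin n → ℝ, QTVD.Gobj τ₂ lam y P (θ₁ ⊔ θ₂) ≤ QTVD.Gobj τ₂ lam y P η) := by
  have hloss : (∑ j : Fin n, QTVD.qloss τ₁ (y j - (θ₁ ⊓ θ₂) j)) +
      (∑ j : Fin n, QTVD.qloss τ₂ (y j - (θ₁ ⊔ θ₂) j)) ≤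
      (∑ j : Fin n, QTVD.qloss τ₁ (y j - θ₁ j)) +
      (∑ j : Fin n, QTVD.qloss τ₂ (y j - θ₂ j)) := by
    rw [← Finset.sum_add_distrib, ← Finset.sum_add_distrib]
    refine Finset.sum_le_sum fun j _ => ?_
    simpa [Pi.inf_apply, Pi.sup_apply, min_def, max_def]
      using qloss_exchange τ₁ τ₂ hτ12 (θ₁ j) (θ₂ j) (y j)
  have hpen : lam * P (θ₁ ⊔ θ₂) + lam * P (θ₁ ⊓ θ₂) ≤ lam * P θ₁ + lam * P θ₂ := by
    have := hP θ₁ θ₂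
    nlinarith
  have hsum : QTVD.Gobj τ₁ lam y P (θ₁ ⊓ θ₂) + QTVD.Gobj τ₂ lam y P (θ₁ ⊔ θ₂) ≤
      QTVD.Gobj τ₁ lam y P θ₁ + QTVD.Gobj τ₂ lam y P θ₂ := by
    unfold QTVD.Gobj; linarith
  have h1 := hθ₁ (θ₁ ⊓ θ₂)
  have h2 := hθ₂ (θ₁ ⊔ θ₂)
  constructor
  · intro η; have := hθ₁ η; linarith
  · intro η; have := hθ₂ η; linarith
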